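/- Let A and B be nearly convex subsets of a Euclidean space X. Then the following are equivalent: (i) A ≈ B; (ii) closure A = closure B; (iii) the relative interior of A equals the relative interior of B; (iv) closure of conv A equals closure of conv B; (v) relative interior of conv A equals relative interior of conv B. -/

import Mathlib

open Set

section Euclid
variable {E : Type*} [NormedAddCommGroup E] [NormedSpace ℝ E] {t : Set E}

theorem euclid2' (ht : Convex ℝ t) (hne : (interior t).Nonempty) :
    interior (closure t) = interior t := by
  refine subset_antisymm (fun y hy => ?_) (interior_mono subset_closure)
  obtain ⟨x, hx⟩ := hne
  have hcont : Continuous (fun ε : ℝ => y + ε • (y - x)) := by continuity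
  have h0 : (fun ε : ℝ => y + ε • (y - x)) 0 ∈ interior (closure t) := by simpa
  have hev : ∀ᶠ ε in nhds (0:ℝ), (fun ε : ℝ => y + ε • (y - x)) ε ∈ interior (closure t) :=
    hcont.continuousAt.eventually_mem (isOpen_interior.mem_nhds h0)
  have hev' : ∀ᶠ ε in nhdsWithin (0:ℝ) (Ioi 0),
      y + ε • (y - x) ∈ interior (closure t) ∧ ε ∈ Ioi (0:ℝ) :=
    (hev.filter_mono nhdsWithin_le_nhds).and self_mem_nhdsWithin
  obtain ⟨ε, hmem, hεpos⟩ := hev'.exists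
  have hεpos : (0:ℝ) < ε := hεpos
  have hz : y + ε • (y - x) ∈ closure t := interior_subset hmem
  have ha : (0:ℝ) < ε / (1 + ε) := by positivity
  have hb : (0:ℝ) ≤ 1 / (1 + ε) := by positivity
  have hab : ε / (1 + ε) + 1 / (1 + ε) = 1 := by field_simp; ring
  have := ht.combo_interior_closure_mem_interior hx hz ha hb hab
  have heq : (ε / (1 + ε)) • x + (1 / (1 + ε)) • (y + ε • (y - x)) = y := by
    have h1 : (1:ℝ) + ε ≠ 0 := by positivity
    rw [smul_add, smul_smul, ← add_assoc]
    have h2 : (1 / (1 + ε)) * ε = ε / (1+ε) := by ring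
    rw [h2]
    match_scalars <;> field_simp <;> ring
  rwa [heq] at this

theorem euclid1' (ht : Convex ℝ t) (hne : (interior t).Nonempty) :
    closure (interior t) = closure t := by
  refine subset_antisymm (closure_mono interior_subset) (fun y hy => ?_)
  obtain ⟨x, hx⟩ := hne
  have h1 : openSegment ℝ x y ⊆ interior t :=
    ht.openSegment_interior_closure_subset_interior hx hy
  have h2 : y ∈ closure (openSegment ℝ x y) :=
    segment_subset_closure_openSegment (right_mem_segment ℝ x y)
  exact closure_mono h1 h2
end Euclid

attribute [local instance] AffineSubspace.toNormedAddTorsor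

variable {X : Type*} [NormedAddCommGroup X] [InnerProductSpace ℝ X] [FiniteDimensional ℝ X]

theorem span_closure (s : Set X) : affineSpan ℝ (closure s) = affineSpan ℝ s :=
  le_antisymm
    (affineSpan_le.2 (closure_minimal (subset_affineSpan ℝ s)
      (affineSpan ℝ s).closed_of_finiteDimensional))
    (affineSpan_mono ℝ subset_closure)

theorem coe_preimage_closure (s : Set X) :
    ((↑) ⁻¹' closure s : Set (affineSpan ℝ s)) = closure ((↑) ⁻¹' s : Set (affineSpan ℝ s)) := by
  have hce : Topology.IsClosedEmbedding ((↑) : affineSpan ℝ s → X) :=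
    (affineSpan ℝ s).closed_of_finiteDimensional.isClosedEmbedding_subtypeVal
  refine subset_antisymm (fun x hx => ?_) (hce.continuous.closure_preimage_subset _)
  have himg : Subtype.val '' ((↑) ⁻¹' s : Set (affineSpan ℝ s)) = s :=
    image_preimage_eq_of_subset (by
      rw [Subtype.range_coe]; exact subset_affineSpan ℝ s)
  have : (↑x : X) ∈ Subtype.val '' closure ((↑) ⁻¹' s : Set (affineSpan ℝ s)) := by
    rw [← hce.closure_image_eq, himg]; exact hx
  obtain ⟨y, hy, hyx⟩ := this
  rwa [← Subtype.coe_injective hyx]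

theorem crux {s : Set X} (hs : Convex ℝ s) (hsne : s.Nonempty) :
    interior (closure ((↑) ⁻¹' s : Set (affineSpan ℝ s)))
        = interior ((↑) ⁻¹' s : Set (affineSpan ℝ s))
      ∧ closure (interior ((↑) ⁻¹' s : Set (affineSpan ℝ s)))
        = closure ((↑) ⁻¹' s : Set (affineSpan ℝ s)) := by
  haveI := hsne.to_subtype
  obtain ⟨p, hp⟩ := hsne
  let p' : affineSpan ℝ s := ⟨p, subset_affineSpan ℝ s hp⟩
  let e := (AffineIsometryEquiv.constVSub ℝ p').symm
  let f := e.toHomeomorph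
  set t : Set (affineSpan ℝ s).direction := f ⁻¹' ((↑) ⁻¹' s) with ht_def
  have htconv : Convex ℝ t :=
    hs.affine_preimage ((affineSpan ℝ s).subtype.comp e.toAffineEquiv.toAffineMap)
  have hint : (interior ((↑) ⁻¹' s : Set (affineSpan ℝ s))).Nonempty := by
    have := Set.Nonempty.intrinsicInterior hs ⟨p, hp⟩
    rwa [intrinsicInterior, image_nonempty] at this
  have htne : (interior t).Nonempty := by
    rw [ht_def, ← f.preimage_interior]
    exact hint.preimage f.surjective
  have h2 := euclid2' htconv htne
  have h1 := euclid1' htconv htne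
  have himg : ((↑) ⁻¹' s : Set (affineSpan ℝ s)) = f '' t := (f.image_preimage _).symm
  constructor
  · rw [himg, ← f.image_closure, ← f.image_interior, ← f.image_interior, h2]
  · rw [himg, ← f.image_interior, ← f.image_closure, ← f.image_closure, h1]

theorem K2 {s : Set X} (hs : Convex ℝ s) :
    intrinsicInterior ℝ (closure s) = intrinsicInterior ℝ s := by
  rcases s.eq_empty_or_nonempty with rfl | hsne
  · simp
  rw [intrinsicInterior, intrinsicInterior, span_closure s, coe_preimage_closure s,
    (crux hs hsne).1]

theorem K1 {s : Set X} (hs : Convex ℝ s) :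
    closure (intrinsicInterior ℝ s) = closure s := by
  rcases s.eq_empty_or_nonempty with rfl | hsne
  · simp
  have hce : Topology.IsClosedEmbedding ((↑) : affineSpan ℝ s → X) :=
    (affineSpan ℝ s).closed_of_finiteDimensional.isClosedEmbedding_subtypeVal
  rw [intrinsicInterior, hce.closure_image_eq, (crux hs hsne).2, ← hce.closure_image_eq,
    image_preimage_eq_of_subset (by rw [Subtype.range_coe]; exact subset_affineSpan ℝ s)]

theorem riMono {A B : Set X} (h : affineSpan ℝ A = affineSpan ℝ B) (hAB : A ⊆ B) :
    intrinsicInterior ℝ A ⊆ intrinsicInterior ℝ B := by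
  rw [intrinsicInterior, intrinsicInterior, h]
  exact image_mono (interior_mono (preimage_mono hAB))

theorem reduce {C A : Set X} (hC : Convex ℝ C) (h1 : C ⊆ A) (h2 : A ⊆ closure C) :
    closure A = closure C ∧ intrinsicInterior ℝ A = intrinsicInterior ℝ C := by
  have hclos : closure A = closure C :=
    subset_antisymm (closure_minimal h2 isClosed_closure) (closure_mono h1)
  have hspan : affineSpan ℝ A = affineSpan ℝ C := by
    refine le_antisymm ?_ (affineSpan_mono ℝ h1)
    calc affineSpan ℝ A ≤ affineSpan ℝ (closure C) := affineSpan_mono ℝ h2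
    _ = affineSpan ℝ C := span_closure C
  refine ⟨hclos, subset_antisymm ?_ (riMono hspan.symm h1)⟩
  calc intrinsicInterior ℝ A ⊆ intrinsicInterior ℝ (closure C) :=
        riMono (by rw [hspan, span_closure]) h2
  _ = intrinsicInterior ℝ C := K2 hC

def NearlyEqual (A B : Set X) : Prop :=
  closure A = closure B ∧ intrinsicInterior ℝ A = intrinsicInterior ℝ B

def NearlyConvex (A : Set X) : Prop :=
  ∃ C : Set X, Convex ℝ C ∧ C ⊆ A ∧ A ⊆ closure C

theorem facts {A : Set X} (hA : NearlyConvex A) :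
    closure (convexHull ℝ A) = closure A ∧
    intrinsicInterior ℝ (convexHull ℝ A) = intrinsicInterior ℝ A ∧
    intrinsicInterior ℝ (closure A) = intrinsicInterior ℝ A ∧
    closure (intrinsicInterior ℝ A) = closure A := by
  obtain ⟨C, hC, h1, h2⟩ := hA
  obtain ⟨hc1, hr1⟩ := reduce hC h1 h2
  have hsub : convexHull ℝ A ⊆ closure C := convexHull_min h2 hC.closure
  obtain ⟨hc2, hr2⟩ := reduce hC (h1.trans (subset_convexHull ℝ A)) hsub
  refine ⟨hc2.trans hc1.symm, hr2.trans hr1.symm, ?_, ?_⟩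
  · rw [hc1, K2 hC, hr1]
  · rw [hr1, K1 hC, hc1]

theorem nearlyEqual_tfae (A B : Set X) (hA : NearlyConvex A) (hB : NearlyConvex B) :
    [NearlyEqual A B,
     closure A = closure B,
     intrinsicInterior ℝ A = intrinsicInterior ℝ B,
     closure (convexHull ℝ A) = closure (convexHull ℝ B),
     intrinsicInterior ℝ (convexHull ℝ A) = intrinsicInterior ℝ (convexHull ℝ B)].TFAE := by
  obtain ⟨ca, ra, rca, cra⟩ := facts hA
  obtain ⟨cb, rb, rcb, crb⟩ := facts hB
  tfae_have 1 → 2 := fun h => h.1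
  tfae_have 2 → 3 := by intro h; rw [← rca, ← rcb, h]
  tfae_have 3 → 4 := by intro h; rw [ca, cb, ← cra, ← crb, h]
  tfae_have 4 → 5 := by
    intro h
    rw [← K2 (convex_convexHull ℝ A), ← K2 (convex_convexHull ℝ B), h]
  tfae_have 5 → 1 := by
    intro h
    constructor
    · rw [← ca, ← cb, ← K1 (convex_convexHull ℝ A), ← K1 (convex_convexHull ℝ B), h]
    · rw [← ra, ← rb, h]
  tfae_finish
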